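/- arXiv:1810.01058 — 5 statements merged into one kernel-verified Lean document; each statement's English description precedes it below -/
import Mathlib

section
/- Let α, β ∈ ℂ with αβ ≠ 0, αβ ≠ 1, and β ≠ −conj(α), and let (a_n) be a complex sequence with a_n → 0 satisfying, for every n ≥ 1, a_{2n+1} + (α+conj(β))a_{2n} + α·conj(β)·a_{2n−1} = 0 and conj(α)·β·a_{2n+1} + (conj(α)+β)a_{2n} + a_{2n−1} = 0. If moreover |α| ≠ 1 or |β| ≠ 1, then a_n = 0 for all n ≥ 1. -/
open Filter ComplexConjugate

/-- If the norms of consecutive terms (from index 1 on) agree and the sequence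
tends to 0, then all terms from index 1 on vanish. -/
lemma stmt3_aux (c : ℕ → ℂ) (h : ∀ n, 1 ≤ n → ‖c (n + 1)‖ = ‖c n‖)
    (hlim : Tendsto c atTop (nhds 0)) : ∀ n, 1 ≤ n → c n = 0 := by
  have hconst : ∀ n, 1 ≤ n → ‖c n‖ = ‖c 1‖ := by
    intro n hn
    induction n with
    | zero => omega
    | succ k ih =>
      rcases Nat.lt_or_ge k 1 with hk | hk
      · have : k + 1 = 1 := by omega
        rw [this]
      · rw [h k hk, ih hk]
  have h1 : Tendsto (fun n => ‖c n‖) atTop (nhds 0) := by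
    simpa using hlim.norm
  have h2 : Tendsto (fun n => ‖c n‖) atTop (nhds ‖c 1‖) := by
    apply Tendsto.congr' _ tendsto_const_nhds
    filter_upwards [eventually_ge_atTop 1] with n hn
    exact (hconst n hn).symm
  have h0 : ‖c 1‖ = 0 := tendsto_nhds_unique h2 h1
  intro n hn
  have := hconst n hn
  rw [h0] at this
  exact norm_eq_zero.mp this

/-- contrapositive form of the dichotomy lemma. -/
theorem stmt3 (α β : ℂ) (h0 : α * β ≠ 0) (h1 : α * β ≠ 1) (h2 : β ≠ -conj α)
    (a : ℕ → ℂ) (hlim : Tendsto a atTop (nhds 0))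
    (hrec1 : ∀ n : ℕ, 1 ≤ n →
      a (2 * n + 1) + (α + conj β) * a (2 * n) + α * conj β * a (2 * n - 1) = 0)
    (hrec2 : ∀ n : ℕ, 1 ≤ n →
      conj α * β * a (2 * n + 1) + (conj α + β) * a (2 * n) + a (2 * n - 1) = 0)
    (hmod : ‖α‖ ≠ 1 ∨ ‖β‖ ≠ 1) :
    ∀ n : ℕ, 1 ≤ n → a n = 0 := by
  set D : ℂ := 1 - α * conj β * (conj α * β) with hDdef
  set P : ℂ := conj α * (β * conj β - 1) + β * (α * conj α - 1) with hPdef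
  set Q : ℂ := α * (β * conj β - 1) + conj β * (α * conj α - 1) with hQdef
  have key1 : ∀ n, 1 ≤ n → D * a (2 * n + 1) = Q * a (2 * n) := by
    intro n hn
    have e1 := hrec1 n hn
    have e2 := hrec2 n hn
    rw [hDdef, hQdef]
    linear_combination e1 - α * conj β * e2
  have key2 : ∀ n, 1 ≤ n → D * a (2 * n - 1) = P * a (2 * n) := by
    intro n hn
    have e1 := hrec1 n hn
    have e2 := hrec2 n hn
    rw [hDdef, hPdef]
    linear_combination e2 - conj α * β * e1
  have hPQ : P = conj Q := by
    rw [hPdef, hQdef]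
    simp only [map_add, map_mul, map_sub, map_one, Complex.conj_conj]
    ring
  have hnormPQ : ‖P‖ = ‖Q‖ := by rw [hPQ, RCLike.norm_conj]
  have heven_lim : Tendsto (fun n => a (2 * n)) atTop (nhds 0) :=
    hlim.comp (tendsto_atTop_atTop.mpr fun b => ⟨b, fun n hn => by omega⟩)
  have hodd_lim : Tendsto (fun n => a (2 * n - 1)) atTop (nhds 0) :=
    hlim.comp (tendsto_atTop_atTop.mpr fun b => ⟨b + 1, fun n hn => by omega⟩)
  suffices hsuff : (∀ n, 1 ≤ n → a (2 * n) = 0) ∧ (∀ n, 1 ≤ n → a (2 * n - 1) = 0) by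
    intro m hm
    rcases Nat.even_or_odd m with ⟨k, hk⟩ | ⟨k, hk⟩
    · have hmk : m = 2 * k := by omega
      rw [hmk]
      exact hsuff.1 k (by omega)
    · have hmk : m = 2 * (k + 1) - 1 := by omega
      rw [hmk]
      exact hsuff.2 (k + 1) (by omega)
  by_cases hD : D = 0
  · -- |αβ| = 1 case
    have hprod : α * conj β * (conj α * β) = 1 := by
      rw [hDdef] at hD
      linear_combination -hD
    have hP : P ≠ 0 := by
      intro hP0
      rw [hPdef] at hP0
      have key : (α * conj α - 1) * (β * (α * conj α) - conj α) = 0 := by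
        linear_combination (α * conj α) * hP0 - conj α * hprod
      rcases mul_eq_zero.mp key with h | h
      · have hu : α * conj α = 1 := by linear_combination h
        have hv : β * conj β = 1 := by linear_combination hprod - β * conj β * hu
        have hα2 : ‖α‖ * ‖α‖ = 1 := by
          have := congrArg norm hu
          simpa [norm_mul, RCLike.norm_conj] using this
        have hβ2 : ‖β‖ * ‖β‖ = 1 := by
          have := congrArg norm hv
          simpa [norm_mul, RCLike.norm_conj] using this
        have hα1 : ‖α‖ = 1 := by nlinarith [norm_nonneg α]
        have hβ1 : ‖β‖ = 1 := by nlinarith [norm_nonneg β]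
        rcases hmod with h' | h' <;> [exact h' hα1; exact h' hβ1]
      · have hαne : α ≠ 0 := fun hh => h0 (by simp [hh])
        have hcα : conj α ≠ 0 := by
          simpa using hαne
        have hab : (α * β - 1) * conj α = 0 := by linear_combination h
        rcases mul_eq_zero.mp hab with h' | h'
        · exact h1 (by linear_combination h')
        · exact hcα h'
    have heven : ∀ n, 1 ≤ n → a (2 * n) = 0 := by
      intro n hn
      have := key2 n hn
      rw [hD, zero_mul] at this
      exact (mul_eq_zero.mp this.symm).resolve_left hP
    have habs : ‖α * conj β‖ = 1 := by
      have h1' : ‖α * conj β‖ * ‖conj α * β‖ = 1 := by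
        rw [← norm_mul, hprod, norm_one]
      have h2' : ‖conj α * β‖ = ‖α * conj β‖ := by
        simp [norm_mul, RCLike.norm_conj, mul_comm]
      rw [h2'] at h1'
      nlinarith [norm_nonneg (α * conj β)]
    have hodd : ∀ n, 1 ≤ n → a (2 * n - 1) = 0 := by
      apply stmt3_aux _ _ hodd_lim
      intro n hn
      have e1 := hrec1 n hn
      have h2n := heven n hn
      have hstep : a (2 * n + 1) = -(α * conj β) * a (2 * n - 1) := by
        linear_combination e1 - (α + conj β) * h2n
      have hidx : 2 * (n + 1) - 1 = 2 * n + 1 := by omega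
      show ‖a (2 * (n + 1) - 1)‖ = ‖a (2 * n - 1)‖
      rw [hidx, hstep, norm_mul, norm_neg, habs, one_mul]
    exact ⟨heven, hodd⟩
  · by_cases hP : P = 0
    · -- both coefficients vanish: odd terms vanish directly
      have hQ : Q = 0 := by
        have : Q = conj P := by rw [hPQ, Complex.conj_conj]
        rw [this, hP, map_zero]
      have hodd : ∀ n, 1 ≤ n → a (2 * n - 1) = 0 := by
        intro n hn
        have := key2 n hn
        rw [hP, zero_mul] at this
        exact (mul_eq_zero.mp this).resolve_left hD
      have hodd' : ∀ n, 1 ≤ n → a (2 * n + 1) = 0 := by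
        intro n hn
        have := key1 n hn
        rw [hQ, zero_mul] at this
        exact (mul_eq_zero.mp this).resolve_left hD
      have hsum : α + conj β ≠ 0 := by
        intro hh
        apply h2
        have : conj β = -α := by linear_combination hh
        calc β = conj (conj β) := by rw [Complex.conj_conj]
        _ = conj (-α) := by rw [this]
        _ = -conj α := by rw [map_neg]
      have heven : ∀ n, 1 ≤ n → a (2 * n) = 0 := by
        intro n hn
        have e1 := hrec1 n hn
        have e1' : (α + conj β) * a (2 * n) = 0 := by
          linear_combination e1 - α * conj β * hodd n hn - hodd' n hn
        exact (mul_eq_zero.mp e1').resolve_left hsum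
      exact ⟨heven, hodd⟩
    · -- generic case: even terms have constant norm
      have heven : ∀ n, 1 ≤ n → a (2 * n) = 0 := by
        apply stmt3_aux _ _ heven_lim
        intro n hn
        have k1 := key1 n hn
        have k2 := key2 (n + 1) (by omega)
        have hidx : 2 * (n + 1) - 1 = 2 * n + 1 := by omega
        rw [hidx] at k2
        have hrel : P * a (2 * (n + 1)) = Q * a (2 * n) := by
          rw [← k1, ← k2]
        have hn1 : ‖P‖ * ‖a (2 * (n + 1))‖ = ‖P‖ * ‖a (2 * n)‖ := by
          rw [← norm_mul, hrel, norm_mul, hnormPQ]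
        exact mul_left_cancel₀ (norm_ne_zero_iff.mpr hP) hn1
      have hodd : ∀ n, 1 ≤ n → a (2 * n - 1) = 0 := by
        intro n hn
        have := key2 n hn
        rw [heven n hn, mul_zero] at this
        exact (mul_eq_zero.mp this).resolve_left hD
      exact ⟨heven, hodd⟩
end

section
/- Let f, g ∈ H^2 with Taylor coefficients (f_k), (g_k). Then ⟨S^{*2m} f, S^{*2n} g⟩ = 0 in H^2 for all m, n ≥ 0 if and only if f_{2m}·conj(g_{2n}) + f_{2m+1}·conj(g_{2n+1}) = 0 for all m, n ≥ 0. -/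
open ComplexConjugate

private lemma summ_aux (f g : ℕ → ℂ)
    (hf : Summable fun k => ‖f k‖ ^ 2) (hg : Summable fun k => ‖g k‖ ^ 2)
    (a b : ℕ) : Summable fun k => f (a + k) * conj (g (b + k)) := by
  apply Summable.of_norm
  have hb : Summable fun k => ‖f (a + k)‖ ^ 2 + ‖g (b + k)‖ ^ 2 :=
    (hf.comp_injective (add_right_injective a)).add
      (hg.comp_injective (add_right_injective b))
  refine Summable.of_nonneg_of_le (fun k => norm_nonneg _) (fun k => ?_) hb
  rw [norm_mul, RCLike.norm_conj]
  nlinarith [norm_nonneg (f (a + k)), norm_nonneg (g (b + k)),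
    sq_nonneg (‖f (a + k)‖ - ‖g (b + k)‖)]

/-- for `f, g ∈ H²` (with coefficient sequences `(f k)`, `(g k)`),
`⟨S*^{2m} f, S*^{2n} g⟩ = ∑_k f_{2m+k} conj (g_{2n+k})` vanishes for all `m, n ≥ 0`
iff `f_{2m} conj (g_{2n}) + f_{2m+1} conj (g_{2n+1}) = 0` for all `m, n ≥ 0`. -/
theorem stmt5 (f g : ℕ → ℂ)
    (hf : Summable fun k => ‖f k‖ ^ 2) (hg : Summable fun k => ‖g k‖ ^ 2) :
    (∀ m n : ℕ, ∑' k : ℕ, f (2 * m + k) * conj (g (2 * n + k)) = 0) ↔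
      (∀ m n : ℕ,
        f (2 * m) * conj (g (2 * n)) + f (2 * m + 1) * conj (g (2 * n + 1)) = 0) := by
  constructor
  · intro H m n
    have hs := summ_aux f g hf hg (2 * m) (2 * n)
    have h2 := Summable.sum_add_tsum_nat_add 2 hs
    have e : (fun k => f (2 * m + (k + 2)) * conj (g (2 * n + (k + 2)))) =
        fun k => f (2 * (m + 1) + k) * conj (g (2 * (n + 1) + k)) := by
      funext k; ring_nf
    rw [H m n] at h2
    have h3 : ∑' k, f (2 * m + (k + 2)) * conj (g (2 * n + (k + 2))) = 0 := by
      rw [e]; exact H (m + 1) (n + 1)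
    rw [h3, add_zero] at h2
    simpa [Finset.sum_range_succ] using h2
  · intro H m n
    set h : ℕ → ℂ := fun k => f (2 * m + k) * conj (g (2 * n + k)) with hh
    have hs : Summable h := summ_aux f g hf hg (2 * m) (2 * n)
    have heven : Summable fun j => h (2 * j) :=
      hs.comp_injective fun a b hab => by omega
    have hodd : Summable fun j => h (2 * j + 1) :=
      hs.comp_injective fun a b hab => by omega
    have hsplit := tsum_even_add_odd heven hodd
    rw [← hsplit, ← Summable.tsum_add heven hodd]
    have : ∀ j, h (2 * j) + h (2 * j + 1) = 0 := by
      intro j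
      have := H (m + j) (n + j)
      simp only [hh]
      have e1 : 2 * m + 2 * j = 2 * (m + j) := by ring
      have e2 : 2 * n + 2 * j = 2 * (n + j) := by ring
      have e3 : 2 * m + (2 * j + 1) = 2 * (m + j) + 1 := by ring
      have e4 : 2 * n + (2 * j + 1) = 2 * (n + j) + 1 := by ring
      rw [e1, e2, e3, e4]; exact this
    simp [this]
end

section
/- Let H be a Hilbert space and T a bounded operator on H with rank(I − T T*) ≤ 1, say I − T T* = v ⊗ v for a vector v ∈ H. Suppose the closed linear span of {T^n v : n ≥ 0} equals H. Then T has no nontrivial reducing subspace (T is irreducible). -/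
/-- Theorem 3.1, abstract form: if `I − T T* = v ⊗ v` and the
orbit `{Tⁿ v}` spans a dense subspace of `H`, then `T` has no nontrivial
reducing subspace. -/
theorem stmt10 {H : Type*} [NormedAddCommGroup H] [InnerProductSpace ℂ H]
    [CompleteSpace H] (T : H →L[ℂ] H) (v : H)
    (hdef : ∀ f : H, f - T ((ContinuousLinearMap.adjoint T) f) = (inner ℂ v f : ℂ) • v)
    (hcyc : (Submodule.span ℂ {x : H | ∃ n : ℕ, x = (T ^ n) v}).topologicalClosure = ⊤)
    (M : Submodule ℂ H) (hMc : IsClosed (M : Set H))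
    (hT : ∀ f ∈ M, T f ∈ M)
    (hT' : ∀ f ∈ M, (ContinuousLinearMap.adjoint T) f ∈ M) :
    M = ⊥ ∨ M = ⊤ := by
  by_cases hv : ∃ f ∈ M, (inner ℂ v f : ℂ) ≠ 0
  · right
    obtain ⟨f, hfM, hf⟩ := hv
    have h1 : f - T ((ContinuousLinearMap.adjoint T) f) ∈ M :=
      M.sub_mem hfM (hT _ (hT' _ hfM))
    rw [hdef f] at h1
    have hvM : v ∈ M := by
      have h2 := M.smul_mem (inner ℂ v f : ℂ)⁻¹ h1
      rwa [smul_smul, inv_mul_cancel₀ hf, one_smul] at h2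
    have horb : ∀ n : ℕ, (T ^ n) v ∈ M := by
      intro n
      induction n with
      | zero => simpa using hvM
      | succ n ih =>
        rw [pow_succ']
        exact hT _ ih
    have hle : Submodule.span ℂ {x : H | ∃ n : ℕ, x = (T ^ n) v} ≤ M :=
      Submodule.span_le.2 (by rintro x ⟨n, rfl⟩; exact horb n)
    have hcl := Submodule.topologicalClosure_minimal _ hle hMc
    rw [hcyc] at hcl
    exact top_unique hcl
  · left
    push_neg at hv
    have hvMo : v ∈ Mᗮ := by
      rw [Submodule.mem_orthogonal']
      exact hv
    have hMoT : ∀ f ∈ Mᗮ, T f ∈ Mᗮ := by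
      intro f hf
      rw [Submodule.mem_orthogonal'] at hf ⊢
      intro u hu
      rw [← ContinuousLinearMap.adjoint_inner_right]
      exact hf _ (hT' _ hu)
    have horb : ∀ n : ℕ, (T ^ n) v ∈ Mᗮ := by
      intro n
      induction n with
      | zero => simpa using hvMo
      | succ n ih =>
        rw [pow_succ']
        exact hMoT _ ih
    have hle : Submodule.span ℂ {x : H | ∃ n : ℕ, x = (T ^ n) v} ≤ Mᗮ :=
      Submodule.span_le.2 (by rintro x ⟨n, rfl⟩; exact horb n)
    have hcl := Submodule.topologicalClosure_minimal _ hle M.isClosed_orthogonal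
    rw [hcyc] at hcl
    have hMo : Mᗮ = ⊤ := top_unique hcl
    have := Submodule.orthogonal_disjoint M
    rw [hMo, disjoint_top] at this
    exact this
end

section
/- Let b be an even function in H^∞ and α ∈ ℂ. Then S*b + α·S*²b = (S*²b)·(z + α) and −conj(α)·S*b + S*²b = (S*²b)·(−conj(α)z + 1), and consequently for all m, n ≥ 0, ⟨S*^{2m}(S*b + α S*²b), S*^{2n}(−conj(α) S*b + S*²b)⟩ = 0 in H². -/
open ComplexConjugate

/-- for an even `b ∈ H^∞` with Taylor coefficients `c` (all odd
coefficients vanish) and `α ∈ ℂ`, one has the factorizations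
`S*b + α S*²b = (S*²b)(z + α)` and `−conj α · S*b + S*²b = (S*²b)(−conj α · z + 1)`
on the unit disk, and consequently the `H²`-orthogonality
`⟨S*^{2m}(S*b + α S*²b), S*^{2n}(−conj α S*b + S*²b)⟩ = 0` for all `m, n ≥ 0`
(inner products computed as sums over Taylor coefficients). -/
theorem stmt14 (c : ℕ → ℂ) (hinfty : ∃ C : ℝ, ∀ z : ℂ, ‖z‖ < 1 → ‖∑' k : ℕ, c k * z ^ k‖ ≤ C)
    (hsum : Summable fun k => ‖c k‖ ^ 2)
    (heven : ∀ k, Odd k → c k = 0) (α : ℂ) :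
    (∀ z : ℂ, ‖z‖ < 1 →
      ∑' k : ℕ, (c (k + 1) + α * c (k + 2)) * z ^ k =
        (∑' k : ℕ, c (k + 2) * z ^ k) * (z + α)) ∧
    (∀ z : ℂ, ‖z‖ < 1 →
      ∑' k : ℕ, (-conj α * c (k + 1) + c (k + 2)) * z ^ k =
        (∑' k : ℕ, c (k + 2) * z ^ k) * (-conj α * z + 1)) ∧
    (∀ m n : ℕ,
      ∑' k : ℕ, (c (2 * m + k + 1) + α * c (2 * m + k + 2)) *
        conj (-conj α * c (2 * n + k + 1) + c (2 * n + k + 2)) = 0) := by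
  obtain ⟨B, hB⟩ : ∃ B : ℝ, ∀ k, ‖c k‖ ≤ B := by
    refine ⟨Real.sqrt (∑' k, ‖c k‖ ^ 2), fun k => ?_⟩
    rw [show ‖c k‖ = Real.sqrt (‖c k‖ ^ 2) by rw [Real.sqrt_sq (norm_nonneg _)]]
    exact Real.sqrt_le_sqrt (Summable.le_tsum hsum k fun i _ => sq_nonneg _)
  have hsummz : ∀ (s : ℕ) (z : ℂ), ‖z‖ < 1 → Summable fun k => c (k + s) * z ^ k := by
    intro s z hz
    apply Summable.of_norm
    refine Summable.of_nonneg_of_le (fun k => norm_nonneg _) (fun k => ?_)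
      ((summable_geometric_of_lt_one (norm_nonneg z) hz).mul_left B)
    rw [norm_mul, norm_pow]
    exact mul_le_mul_of_nonneg_right (hB _) (pow_nonneg (norm_nonneg z) k)
  have hc1 : c 1 = 0 := heven 1 ⟨0, rfl⟩
  have key : ∀ z : ℂ, ‖z‖ < 1 →
      ∑' k : ℕ, c (k + 1) * z ^ k = z * ∑' k : ℕ, c (k + 2) * z ^ k := by
    intro z hz
    rw [Summable.tsum_eq_zero_add (hsummz 1 z hz)]
    simp only [zero_add, hc1, pow_zero, zero_mul]
    rw [← tsum_mul_left]
    congr 1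
    ext k
    ring_nf
  refine ⟨?_, ?_, ?_⟩
  · intro z hz
    have : ∑' k : ℕ, (c (k + 1) + α * c (k + 2)) * z ^ k =
        (∑' k : ℕ, c (k + 1) * z ^ k) + α * ∑' k : ℕ, c (k + 2) * z ^ k := by
      rw [← tsum_mul_left]
      rw [← Summable.tsum_add (hsummz 1 z hz) ((hsummz 2 z hz).mul_left α)]
      congr 1; ext k; ring
    rw [this, key z hz]; ring
  · intro z hz
    have : ∑' k : ℕ, (-conj α * c (k + 1) + c (k + 2)) * z ^ k =
        (-conj α) * (∑' k : ℕ, c (k + 1) * z ^ k) + ∑' k : ℕ, c (k + 2) * z ^ k := by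
      rw [← tsum_mul_left]
      rw [← Summable.tsum_add ((hsummz 1 z hz).mul_left _) (hsummz 2 z hz)]
      congr 1; ext k; ring
    rw [this, key z hz]; ring
  · intro m n
    set f : ℕ → ℂ := fun k => (c (2 * m + k + 1) + α * c (2 * m + k + 2)) *
        conj (-conj α * c (2 * n + k + 1) + c (2 * n + k + 2)) with hf
    set g : ℕ → ℂ := fun j => c (2 * m + 2 * j + 2) * conj (c (2 * n + 2 * j + 2)) with hg
    have hfe : ∀ j, f (2 * j) = α * g j := by
      intro j
      have h1 : c (2 * m + 2 * j + 1) = 0 := heven _ ⟨m + j, by ring⟩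
      have h2 : c (2 * n + 2 * j + 1) = 0 := heven _ ⟨n + j, by ring⟩
      simp only [hf, hg, h1, h2, mul_zero, zero_add, map_add, map_mul, map_neg,
        Complex.conj_conj, map_zero, add_zero]
      ring
    have hfo : ∀ j, f (2 * j + 1) = -α * g j := by
      intro j
      have h1 : c (2 * m + (2 * j + 1) + 2) = 0 := heven _ ⟨m + j + 1, by ring⟩
      have h2 : c (2 * n + (2 * j + 1) + 2) = 0 := heven _ ⟨n + j + 1, by ring⟩
      have e1 : 2 * m + (2 * j + 1) + 1 = 2 * m + 2 * j + 2 := by ring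
      have e2 : 2 * n + (2 * j + 1) + 1 = 2 * n + 2 * j + 2 := by ring
      simp only [hf, hg, h1, h2, e1, e2, mul_zero, add_zero, map_add, map_mul, map_neg,
        Complex.conj_conj, map_zero, zero_add]
      ring
    have hgs : Summable g := by
      apply Summable.of_norm
      have h1 : Summable fun j => ‖c (2 * m + 2 * j + 2)‖ ^ 2 := by
        have := hsum.comp_injective (i := fun j : ℕ => 2 * m + 2 * j + 2)
          (fun a b hab => by simp only [] at hab; omega)
        exact this
      have h2 : Summable fun j => ‖c (2 * n + 2 * j + 2)‖ ^ 2 := by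
        have := hsum.comp_injective (i := fun j : ℕ => 2 * n + 2 * j + 2)
          (fun a b hab => by simp only [] at hab; omega)
        exact this
      refine Summable.of_nonneg_of_le (fun j => norm_nonneg _) (fun j => ?_)
        (((h1.add h2).div_const 2))
      simp only [hg, norm_mul, RCLike.norm_conj]
      nlinarith [norm_nonneg (c (2 * m + 2 * j + 2)), norm_nonneg (c (2 * n + 2 * j + 2)),
        sq_nonneg (‖c (2 * m + 2 * j + 2)‖ - ‖c (2 * n + 2 * j + 2)‖)]
    have hse : Summable fun j => f (2 * j) := by
      simpa only [hfe] using hgs.mul_left α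
    have hso : Summable fun j => f (2 * j + 1) := by
      simpa only [hfo] using hgs.mul_left (-α)
    rw [← tsum_even_add_odd hse hso]
    simp only [hfe, hfo]
    rw [tsum_mul_left, tsum_mul_left]
    ring
end

section
/- Let α, β ∈ ℂ with |α| = |β| = 1 and αβ ≠ 1, and let (b_k) be a square-summable sequence of complex numbers. Suppose for every n ≥ 0: (conj(β)+α)·Σ_{k≥2n+1}|b_k|² − α·|b_{2n+1}|² + c_n + α·conj(β)·conj(c_n) = 0, where c_n = Σ_{k≥0} b_{2n+1+k}·conj(b_{2n+2+k}). Then b_{2n+1} = 0 for every n ≥ 0. -/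
open ComplexConjugate

/-- the key coefficient computation in the main theorem.
If `|α| = |β| = 1`, `αβ ≠ 1`, `(b k)` is square-summable and for every `n ≥ 0`
`(conj β + α)·∑_{k ≥ 2n+1} |b_k|² − α·|b_{2n+1}|² + c_n + α·conj β·conj c_n = 0`,
where `c_n = ∑_k b_{2n+1+k}·conj b_{2n+2+k}`, then `b_{2n+1} = 0` for all `n ≥ 0`. -/
theorem stmt16 (α β : ℂ) (hα : ‖α‖ = 1) (hβ : ‖β‖ = 1) (hαβ : α * β ≠ 1)
    (b : ℕ → ℂ) (hsum : Summable fun k => ‖b k‖ ^ 2)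
    (heq : ∀ n : ℕ,
      (conj β + α) * ((∑' k : ℕ, ‖b (2 * n + 1 + k)‖ ^ 2 : ℝ) : ℂ)
        - α * ((‖b (2 * n + 1)‖ ^ 2 : ℝ) : ℂ)
        + (∑' k : ℕ, b (2 * n + 1 + k) * conj (b (2 * n + 2 + k)))
        + α * conj β * conj (∑' k : ℕ, b (2 * n + 1 + k) * conj (b (2 * n + 2 + k)))
        = 0) :
    ∀ n : ℕ, b (2 * n + 1) = 0 := by
  have hα' : α * conj α = 1 := by
    rw [Complex.mul_conj]
    norm_cast
    simp [Complex.normSq_eq_norm_sq, hα]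
  have hβ' : β * conj β = 1 := by
    rw [Complex.mul_conj]
    norm_cast
    simp [Complex.normSq_eq_norm_sq, hβ]
  intro n
  set s : ℝ := ∑' k : ℕ, ‖b (2 * n + 1 + k)‖ ^ 2 with hs
  set c : ℂ := ∑' k : ℕ, b (2 * n + 1 + k) * conj (b (2 * n + 2 + k)) with hc
  set p : ℝ := ‖b (2 * n + 1)‖ ^ 2 with hp
  have h1 := heq n
  have h2 := congrArg (conj : ℂ → ℂ) h1
  simp only [map_add, map_sub, map_mul, map_zero, Complex.conj_conj,
    Complex.conj_ofReal] at h2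
  have key : (conj α - β) * ((p : ℝ) : ℂ) = 0 := by
    linear_combination (conj α * β) * h1 - h2
      + (β * ((p : ℂ) - (s : ℂ)) - conj c * β * conj β) * hα'
      + (-(s : ℂ) * conj α - conj c) * hβ'
  have hne : conj α - β ≠ 0 := by
    intro h
    apply hαβ
    rw [← sub_eq_zero.mp h]
    exact hα'
  have hp0 : (p : ℂ) = 0 := by
    rcases mul_eq_zero.mp key with h | h
    · exact absurd h hne
    · exact h
  have : ‖b (2 * n + 1)‖ ^ 2 = 0 := by exact_mod_cast hp0
  have := pow_eq_zero_iff (n := 2) (by norm_num) |>.mp this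
  simpa using this
end
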